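/- Assume that P_t ≠ δ for every t = 1,…,T. Then the empirical sample complexity Ŝ^{(N)} is a consistent estimator of the sample complexity S: for every η > 0, lim_{N→∞} P(|Ŝ^{(N)} − S| > η) = 0. -/

import Mathlib

open MeasureTheory ProbabilityTheory Filter Topology

/-- **Consistency of the empirical sample complexity estimator.**
Fix `T : ℕ`, a threshold `Vstar : ℝ` and `δ ∈ (0,1]`. For each `t = 1,…,T`, the
random variables `(V t i)_{i ∈ ℕ}` are i.i.d.  With
`P t = ℙ(V t 1 ≥ Vstar)`, `P̂ₜ⁽ᴺ⁾ = (1/N) ∑_{i=1}^N 𝟙[V t i ≥ Vstar]`,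
`S = ∑_{t=1}^T 𝟙[P t < δ]`, and `Ŝ⁽ᴺ⁾ = ∑_{t=1}^T 𝟙[P̂ₜ⁽ᴺ⁾ < δ]`,
if `P t ≠ δ` for all `t = 1,…,T`, then for every `η > 0` we have
`P(|Ŝ⁽ᴺ⁾ − S| > η) → 0` as `N → ∞`. -/
theorem empirical_sample_complexity_consistent
    {Ω : Type*} [MeasurableSpace Ω] (μ : Measure Ω) [IsProbabilityMeasure μ]
    (T : ℕ) (Vstar : ℝ) (δ : ℝ) (hδ : δ ∈ Set.Ioc (0 : ℝ) 1)
    (V : ℕ → ℕ → Ω → ℝ)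
    (hmeas : ∀ t i, Measurable (V t i))
    (hindep : ∀ t ∈ Finset.Icc 1 T,
      iIndepFun (V t) μ)
    (hident : ∀ t ∈ Finset.Icc 1 T, ∀ i j : ℕ, IdentDistrib (V t i) (V t j) μ μ)
    (P : ℕ → ℝ) (hP : ∀ t, P t = (μ {ω | Vstar ≤ V t 1 ω}).toReal)
    (Phat : ℕ → ℕ → Ω → ℝ)
    (hPhat : ∀ t N ω, Phat t N ω
      = (1 / (N : ℝ)) * ∑ i ∈ Finset.Icc 1 N, (if Vstar ≤ V t i ω then (1 : ℝ) else 0))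
    (S : ℝ) (hS : S = ∑ t ∈ Finset.Icc 1 T, (if P t < δ then (1 : ℝ) else 0))
    (Shat : ℕ → Ω → ℝ)
    (hShat : ∀ N ω, Shat N ω
      = ∑ t ∈ Finset.Icc 1 T, (if Phat t N ω < δ then (1 : ℝ) else 0))
    (hne : ∀ t ∈ Finset.Icc 1 T, P t ≠ δ)
    (η : ℝ) (hη : 0 < η) :
    Tendsto (fun N : ℕ => (μ {ω | η < |Shat N ω - S|}).toReal) atTop (nhds 0) := by
  -- measurability of `Phat` and `Shat`
  have hPhatMeas : ∀ t N, Measurable (Phat t N) := by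
    intro t N
    have h : Phat t N = fun ω =>
        (1 / (N : ℝ)) * ∑ i ∈ Finset.Icc 1 N, (if Vstar ≤ V t i ω then (1 : ℝ) else 0) :=
      funext (hPhat t N)
    rw [h]
    exact (Finset.measurable_sum _ fun i _ =>
      Measurable.ite (measurableSet_le measurable_const (hmeas t i)) measurable_const
        measurable_const).const_mul _
  have hShatMeas : ∀ N, Measurable (Shat N) := by
    intro N
    have h : Shat N = fun ω =>
        ∑ t ∈ Finset.Icc 1 T, (if Phat t N ω < δ then (1 : ℝ) else 0) := funext (hShat N)
    rw [h]
    exact Finset.measurable_sum _ fun t _ =>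
      Measurable.ite (measurableSet_lt (hPhatMeas t N) measurable_const) measurable_const
        measurable_const
  -- LLN: a.e. convergence of `Phat t · ω` to `P t`
  have key : ∀ t ∈ Finset.Icc 1 T, ∀ᵐ ω ∂μ, Tendsto (fun N => Phat t N ω) atTop (𝓝 (P t)) := by
    intro t ht
    set f : ℝ → ℝ := fun y => if Vstar ≤ y then 1 else 0 with hf
    have hfm : Measurable f :=
      Measurable.ite (measurableSet_le measurable_const measurable_id) measurable_const
        measurable_const
    set X : ℕ → Ω → ℝ := fun i ω => Set.indicator {ω | Vstar ≤ V t (i + 1) ω} (fun _ => 1) ω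
      with hX
    have hXeq : ∀ i, X i = f ∘ V t (i + 1) := by
      intro i
      funext ω
      simp [hX, hf, Set.indicator_apply, Set.mem_setOf_eq]
    have hXsets : ∀ i, MeasurableSet {ω | Vstar ≤ V t (i + 1) ω} := fun i =>
      measurableSet_le measurable_const (hmeas t (i + 1))
    have hint : Integrable (X 0) μ := (integrable_const (1 : ℝ)).indicator (hXsets 0)
    have hindep' : Pairwise (Function.onFun (IndepFun · · μ) X) := by
      intro i j hij
      have h1 : IndepFun (V t (i + 1)) (V t (j + 1)) μ :=
        (hindep t ht).indepFun (by omega)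
      have h2 := h1.comp hfm hfm
      simpa only [Function.onFun, hXeq] using h2
    have hident' : ∀ i, IdentDistrib (X i) (X 0) μ μ := by
      intro i
      rw [hXeq i, hXeq 0]
      exact (hident t ht (i + 1) (0 + 1)).comp hfm
    have hlln := strong_law_ae_real X hint hindep' hident'
    have hE : μ[X 0] = P t := by
      rw [hP]
      have : μ[X 0] = ∫ ω, Set.indicator {ω | Vstar ≤ V t (0 + 1) ω} (fun _ => (1 : ℝ)) ω ∂μ :=
        rfl
      rw [this, integral_indicator_const _ (hXsets 0)]
      norm_num [measureReal_def]
    have hsum : ∀ N (ω : Ω), Phat t N ω = (∑ i ∈ Finset.range N, X i ω) / N := by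
      intro N ω
      rw [hPhat, ← Finset.Ico_add_one_right_eq_Icc, Finset.sum_Ico_eq_sum_range]
      simp only [Nat.add_sub_cancel, Nat.succ_sub_one]
      rw [one_div, inv_mul_eq_div]
      congr 1
      refine Finset.sum_congr rfl fun i _ => ?_
      rw [hXeq i]
      simp [hf, Nat.add_comm]
    rw [hE] at hlln
    filter_upwards [hlln] with ω hω
    have : (fun N => Phat t N ω) = fun N : ℕ => (∑ i ∈ Finset.range N, X i ω) / N :=
      funext fun N => hsum N ω
    rw [this]
    exact hω
  -- a.e. convergence of `Shat` to `S`
  have keyS : ∀ᵐ ω ∂μ, Tendsto (fun N => Shat N ω) atTop (𝓝 S) := by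
    have hkey := (ae_ball_iff (Finset.Icc 1 T : Finset ℕ).countable_toSet).2 key
    filter_upwards [hkey] with ω hω
    have hc : ∀ t ∈ Finset.Icc 1 T, ∀ᶠ N in atTop,
        (if Phat t N ω < δ then (1 : ℝ) else 0) = (if P t < δ then (1 : ℝ) else 0) := by
      intro t ht
      rcases lt_or_gt_of_ne (hne t ht) with h | h
      · filter_upwards [(hω t ht).eventually_lt_const h] with N hN
        simp [hN, h]
      · filter_upwards [(hω t ht).eventually_const_lt h] with N hN
        simp [not_lt_of_gt hN, not_lt_of_gt h]
    have hev : ∀ᶠ N in atTop, Shat N ω = S := by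
      filter_upwards [(eventually_all_finset (Finset.Icc 1 T)).2 hc] with N hN
      rw [hShat, hS]
      exact Finset.sum_congr rfl hN
    exact Tendsto.congr' (hev.mono fun N hN => hN.symm) tendsto_const_nhds
  -- convergence in measure
  have hTIM : TendstoInMeasure μ Shat atTop (fun _ => S) :=
    tendstoInMeasure_of_tendsto_ae (fun N => (hShatMeas N).aestronglyMeasurable) keyS
  have h1 : Tendsto (fun N => μ {ω | η ≤ dist (Shat N ω) S}) atTop (𝓝 0) := tendstoInMeasure_iff_dist.1 hTIM η hη
  have h2 : Tendsto (fun N => (μ {ω | η ≤ dist (Shat N ω) S}).toReal) atTop (𝓝 0) := by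
    simpa [Function.comp_def] using (ENNReal.tendsto_toReal (by simp)).comp h1
  refine tendsto_of_tendsto_of_tendsto_of_le_of_le tendsto_const_nhds h2
    (fun N => ENNReal.toReal_nonneg) ?_
  intro N
  refine ENNReal.toReal_mono (measure_ne_top μ _) (measure_mono fun ω hω => ?_)
  simp only [Set.mem_setOf_eq, Real.dist_eq] at hω ⊢
  exact le_of_lt hω
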